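/- If $X_1, \ldots, X_n$ are independent with $X_i$ exponentially distributed with rate $(n-i+1)^2$, and $Y_k = \sum_{i=1}^k X_i$, then for $0 \leq \alpha < 1$, $\mathbb{E}[Y_{\lceil \alpha n \rceil}] = \sum_{i=1}^{\lceil \alpha n \rceil} (n-i+1)^{-2}$ and $n\,\mathbb{E}[Y_{\lceil \alpha n \rceil}] \to \alpha/(1-\alpha)$ as $n \to \infty$, while $n^2\,\mathrm{Var}(Y_{\lceil \alpha n \rceil}) \to 0$; consequently $n\,Y_{\lceil \alpha n \rceil}$ converges in probability to $\alpha/(1-\alpha)$. -/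

import Mathlib

section Aux
open MeasureTheory ProbabilityTheory Filter Topology Real Set
open scoped NNReal ENNReal


lemma exp_moment {r : ℝ} (hr : 0 < r) {p : ℕ} (hp : 1 ≤ p) :
    Integrable (fun x => x ^ p) (expMeasure r) ∧
    ∫ x, x ^ p ∂(expMeasure r) = p.factorial / r ^ p := by
  set f : ℝ → ℝ≥0 := fun x => (exponentialPDFReal r x).toNNReal with hf
  have hfm : Measurable f := (measurable_exponentialPDFReal r).real_toNNReal
  have hmeq : expMeasure r = volume.withDensity (fun x => (f x : ℝ≥0∞)) := rfl
  have hsupp : ∀ x, x ∉ Ioi (0:ℝ) → exponentialPDFReal r x * x ^ p = 0 := by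
    intro x hx
    simp only [mem_Ioi, not_lt] at hx
    rcases lt_or_eq_of_le hx with h | h
    · rw [exponentialPDFReal, gammaPDFReal, if_neg (not_le.2 h), zero_mul]
    · rw [h, zero_pow (by omega : p ≠ 0), mul_zero]
  have hIoi : ∀ x ∈ Ioi (0:ℝ), x ^ (p:ℝ) * rexp (-r * x) * r
      = exponentialPDFReal r x * x ^ p := by
    intro x hx
    rw [exponentialPDFReal, gammaPDFReal, if_pos (le_of_lt hx), rpow_natCast]
    simp [rpow_one, Real.Gamma_one]
    ring
  have h1 : IntegrableOn (fun x => x ^ (p:ℝ) * rexp (-r * x)) (Ioi 0) := by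
    have := integrableOn_rpow_mul_exp_neg_mul_rpow (s := (p:ℝ)) (p := 1)
      (by linarith [Nat.cast_nonneg (α := ℝ) p]) zero_lt_one hr
    simpa [rpow_one] using this
  have hint : IntegrableOn (fun x => exponentialPDFReal r x * x ^ p) (Ioi 0) :=
    IntegrableOn.congr_fun (h1.mul_const r) (fun x hx => hIoi x hx) measurableSet_Ioi
  have hintR : Integrable (fun x => exponentialPDFReal r x * x ^ p) := by
    rwa [← integrableOn_iff_integrable_of_support_subset
      (Function.support_subset_iff'.2 hsupp)]
  have hsmul : ∀ x : ℝ, f x • (x ^ p) = exponentialPDFReal r x * x ^ p := by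
    intro x
    rw [NNReal.smul_def, smul_eq_mul, Real.coe_toNNReal _ (exponentialPDFReal_nonneg hr x)]
  constructor
  · rw [hmeq, integrable_withDensity_iff_integrable_smul hfm]
    exact hintR.congr (Filter.Eventually.of_forall fun x => (hsmul x).symm)
  · rw [hmeq, integral_withDensity_eq_integral_smul hfm]
    simp_rw [hsmul]
    rw [← setIntegral_eq_integral_of_forall_compl_eq_zero hsupp]
    rw [← setIntegral_congr_fun measurableSet_Ioi (fun x hx => hIoi x hx)]
    rw [integral_mul_const]
    have : ∀ x ∈ Ioi (0:ℝ), x ^ (p:ℝ) * rexp (-r * x) = x ^ (((p:ℝ)+1) - 1) * rexp (-(r * x)) := by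
      intro x hx; rw [neg_mul]; norm_num
    rw [setIntegral_congr_fun measurableSet_Ioi this,
      integral_rpow_mul_exp_neg_mul_Ioi (by positivity) hr]
    rw [show (p:ℝ) + 1 = ((p+1:ℕ):ℝ) by push_cast; ring, rpow_natCast, Nat.cast_add,
      Nat.cast_one, Real.Gamma_nat_eq_factorial]
    field_simp
    rw [one_div, inv_pow, pow_succ]
    field_simp [hr.ne']

lemma exp_props {Ω : Type*} [MeasurableSpace Ω] (μ : Measure Ω) [IsProbabilityMeasure μ]
    {W : Ω → ℝ} (hW : Measurable W) {r : ℝ} (hr : 0 < r) (hd : μ.map W = expMeasure r) :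
    MemLp W 2 μ ∧ μ[W] = r⁻¹ ∧ variance W μ = (r ^ 2)⁻¹ := by
  haveI : IsProbabilityMeasure (expMeasure r) := isProbabilityMeasure_expMeasure hr
  obtain ⟨hi1, hv1⟩ := exp_moment hr (p := 1) le_rfl
  obtain ⟨hi2, hv2⟩ := exp_moment hr (p := 2) one_le_two
  have hmem2 : MemLp (id : ℝ → ℝ) 2 (expMeasure r) := by
    rw [memLp_two_iff_integrable_sq aestronglyMeasurable_id]
    exact hi2.congr (Filter.Eventually.of_forall fun x => by simp [sq])
  have hmemW : MemLp W 2 μ := by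
    have := (memLp_map_measure_iff (f := W) (g := (id : ℝ → ℝ)) (p := 2)
      aestronglyMeasurable_id hW.aemeasurable).1 (by rwa [hd])
    simpa using this
  have hWint : μ[W] = r⁻¹ := by
    have : ∫ x, (fun y : ℝ => y) x ∂(μ.map W) = ∫ ω, W ω ∂μ :=
      integral_map hW.aemeasurable aestronglyMeasurable_id
    rw [← this, hd]
    have : ∫ x, x ∂(expMeasure r) = ∫ x, x ^ 1 ∂(expMeasure r) := by simp
    rw [this, hv1]
    simp
  refine ⟨hmemW, hWint, ?_⟩
  have hW2 : μ[W ^ 2] = 2 / r ^ 2 := by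
    have : ∫ x, (fun y : ℝ => y ^ 2) x ∂(μ.map W) = ∫ ω, (W ω) ^ 2 ∂μ :=
      integral_map hW.aemeasurable (by fun_prop)
    have h2 : μ[W ^ 2] = ∫ ω, (W ω) ^ 2 ∂μ := rfl
    rw [h2, ← this, hd, hv2]
    norm_num
  rw [variance_eq_sub hmemW, hW2, hWint]
  rw [inv_pow]
  ring


lemma aux_step {x : ℝ} (hx : 0 < x) : ((x+1)^2)⁻¹ ≤ x⁻¹ - (x+1)⁻¹ := by
  have hx1 : (0:ℝ) < x + 1 := by linarith
  rw [inv_sub_inv hx.ne' hx1.ne', inv_eq_one_div,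
    div_le_div_iff₀ (by positivity) (by positivity)]
  nlinarith

lemma aux_step2 {x : ℝ} (hx : 0 < x) : x⁻¹ - (x+1)⁻¹ ≤ (x^2)⁻¹ := by
  have hx1 : (0:ℝ) < x + 1 := by linarith
  rw [inv_sub_inv hx.ne' hx1.ne', inv_eq_one_div,
    div_le_div_iff₀ (by positivity) (by positivity)]
  nlinarith

lemma sum_inv_sq_le {m n : ℕ} (hm : 1 ≤ m) (h : m ≤ n) :
    ∑ j ∈ Finset.Icc (m+1) n, (((j:ℝ))^2)⁻¹ ≤ (m:ℝ)⁻¹ - (n:ℝ)⁻¹ := by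
  induction n, h using Nat.le_induction with
  | base => simp
  | succ n hn ih =>
    rw [Finset.sum_Icc_succ_top (by omega)]
    have h1 : (0:ℝ) < n := by exact_mod_cast (by omega : 0 < n)
    have := aux_step h1
    push_cast
    push_cast at ih
    linarith

lemma sum_inv_sq_ge {m n : ℕ} (h : m ≤ n) :
    ((m:ℝ)+1)⁻¹ - ((n:ℝ)+1)⁻¹ ≤ ∑ j ∈ Finset.Icc (m+1) n, (((j:ℝ))^2)⁻¹ := by
  induction n, h using Nat.le_induction with
  | base => simp
  | succ n hn ih =>
    rw [Finset.sum_Icc_succ_top (by omega)]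
    have h1 : (0:ℝ) < (n:ℝ) + 1 := by positivity
    have h2 : (0:ℝ) < (n:ℝ) + 2 := by linarith
    have key := aux_step2 h1
    push_cast
    push_cast at ih
    linarith

lemma sum_inv_pow4_le {m n : ℕ} (h : m ≤ n) :
    ∑ j ∈ Finset.Icc (m+1) n, (((j:ℝ))^4)⁻¹ ≤ (n:ℝ) * (((m:ℝ)+1)^4)⁻¹ := by
  have hB : ∀ j ∈ Finset.Icc (m+1) n, (((j:ℝ))^4)⁻¹ ≤ (((m:ℝ)+1)^4)⁻¹ := by
    intro j hj
    simp only [Finset.mem_Icc] at hj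
    have : ((m:ℝ)+1) ≤ (j:ℝ) := by exact_mod_cast hj.1
    gcongr
  calc ∑ j ∈ Finset.Icc (m+1) n, (((j:ℝ))^4)⁻¹
      ≤ (Finset.Icc (m+1) n).card • (((m:ℝ)+1)^4)⁻¹ := Finset.sum_le_card_nsmul _ _ _ hB
    _ = ((Finset.Icc (m+1) n).card : ℝ) * (((m:ℝ)+1)^4)⁻¹ := by rw [nsmul_eq_mul]
    _ ≤ (n:ℝ) * (((m:ℝ)+1)^4)⁻¹ := by
        apply mul_le_mul_of_nonneg_right _ (by positivity)
        rw [Nat.card_Icc]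
        exact_mod_cast (by omega : n + 1 - (m+1) ≤ n)

lemma sum_limits (α : ℝ) (hα0 : 0 ≤ α) (hα1 : α < 1) :
    Tendsto (fun n : ℕ =>
      (n:ℝ) * ∑ j ∈ Finset.Icc (n - ⌈α*(n:ℝ)⌉₊ + 1) n, (((j:ℝ))^2)⁻¹)
      atTop (𝓝 (α/(1-α))) ∧
    Tendsto (fun n : ℕ =>
      (n:ℝ)^2 * ∑ j ∈ Finset.Icc (n - ⌈α*(n:ℝ)⌉₊ + 1) n, (((j:ℝ))^4)⁻¹)
      atTop (𝓝 0) := by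
  have h1α : (0:ℝ) < 1 - α := by linarith
  set k : ℕ → ℕ := fun n => ⌈α*(n:ℝ)⌉₊ with hk
  set m : ℕ → ℕ := fun n => n - k n with hm
  have hk_le : ∀ n, k n ≤ n := fun n => Nat.ceil_le.2 (by nlinarith [Nat.cast_nonneg (α := ℝ) n])
  have hm_cast : ∀ n, ((m n : ℝ)) = (n:ℝ) - (k n : ℝ) := fun n => by
    simp only [hm]; push_cast [Nat.cast_sub (hk_le n)]; ring
  have hk_ub : ∀ n : ℕ, (k n : ℝ) < α*(n:ℝ) + 1 := fun n => Nat.ceil_lt_add_one (by positivity)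
  have hk_lb : ∀ n : ℕ, α*(n:ℝ) ≤ (k n : ℝ) := fun n => Nat.le_ceil _
  have hm_lb : ∀ n : ℕ, (1-α)*(n:ℝ) - 1 < (m n : ℝ) := fun n => by
    rw [hm_cast]; nlinarith [hk_ub n]
  have hm_ub : ∀ n : ℕ, (m n : ℝ) ≤ (1-α)*(n:ℝ) := fun n => by
    rw [hm_cast]; nlinarith [hk_lb n]
  -- eventually m n ≥ 1
  have hEm : ∀ᶠ n : ℕ in atTop, 1 ≤ m n := by
    filter_upwards [eventually_ge_atTop ⌈2/(1-α)⌉₊] with n hn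
    have h2 : 2/(1-α) ≤ (n:ℝ) := le_trans (Nat.le_ceil _) (by exact_mod_cast hn)
    have : (1:ℝ) < (m n : ℝ) := by
      have := hm_lb n
      have h3 : (2:ℝ) ≤ (1-α)*(n:ℝ) := by
        rw [div_le_iff₀ h1α] at h2; nlinarith
      linarith
    exact_mod_cast this.le
  have hEn : ∀ᶠ n : ℕ in atTop, 1 ≤ n := eventually_ge_atTop 1
  -- m/n → 1-α
  have hmn : Tendsto (fun n : ℕ => (m n : ℝ)/(n:ℝ)) atTop (𝓝 (1-α)) := by
    have hlow : Tendsto (fun n : ℕ => (1-α) - 1/(n:ℝ)) atTop (𝓝 (1-α)) := by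
      simpa using (tendsto_const_nhds (x := (1-α))).sub tendsto_one_div_atTop_nhds_zero_nat
    apply tendsto_of_tendsto_of_tendsto_of_le_of_le' hlow (tendsto_const_nhds (x := (1-α)))
    · filter_upwards [hEn] with n hn
      have hn0 : (0:ℝ) < n := by exact_mod_cast hn
      rw [le_div_iff₀ hn0]
      have := hm_lb n
      rw [sub_mul, div_mul_cancel₀ _ hn0.ne']
      linarith
    · filter_upwards [hEn] with n hn
      have hn0 : (0:ℝ) < n := by exact_mod_cast hn
      rw [div_le_iff₀ hn0]
      exact hm_ub n
  have hnm : Tendsto (fun n : ℕ => (n:ℝ)/(m n : ℝ)) atTop (𝓝 (1-α)⁻¹) := by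
    simpa [inv_div] using hmn.inv₀ h1α.ne'
  have hnm1 : Tendsto (fun n : ℕ => (n:ℝ)/((m n : ℝ)+1)) atTop (𝓝 (1-α)⁻¹) := by
    have h1 : Tendsto (fun n : ℕ => ((m n : ℝ)+1)/(n:ℝ)) atTop (𝓝 (1-α)) := by
      have := hmn.add tendsto_one_div_atTop_nhds_zero_nat
      simp only [add_zero] at this
      refine this.congr fun n => ?_
      rw [add_div, one_div]
    simpa [inv_div] using h1.inv₀ h1α.ne'
  have hnn1 : Tendsto (fun n : ℕ => (n:ℝ)/((n:ℝ)+1)) atTop (𝓝 1) := by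
    have h1 : Tendsto (fun n : ℕ => ((n:ℝ)+1)/(n:ℝ)) atTop (𝓝 1) := by
      have h2 := (tendsto_const_nhds (x := (1:ℝ))).add tendsto_one_div_atTop_nhds_zero_nat
      simp only [add_zero] at h2
      refine h2.congr' ?_
      filter_upwards [hEn] with n hn
      have hn0 : (n:ℝ) ≠ 0 := by exact_mod_cast Nat.one_le_iff_ne_zero.mp hn
      rw [add_div, div_self hn0, one_div]
    simpa [inv_div] using h1.inv₀ one_ne_zero
  have heq : (1-α)⁻¹ - 1 = α/(1-α) := by field_simp; ring
  constructor
  · have hL := hnm1.sub hnn1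
    have hU := hnm.sub (tendsto_const_nhds (x := (1:ℝ)))
    rw [heq] at hL hU
    apply tendsto_of_tendsto_of_tendsto_of_le_of_le' hL hU
    · filter_upwards [hEn] with n h2
      have hn0 : (0:ℝ) ≤ (n:ℝ) := Nat.cast_nonneg n
      have hs := sum_inv_sq_ge (m := m n) (n := n) (Nat.sub_le n _)
      have h3 := mul_le_mul_of_nonneg_left hs hn0
      have h4 : (n:ℝ) * (((m n : ℝ)+1)⁻¹ - ((n:ℝ)+1)⁻¹)
          = (n:ℝ)/((m n : ℝ)+1) - (n:ℝ)/((n:ℝ)+1) := by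
        rw [mul_sub, div_eq_mul_inv, div_eq_mul_inv]
      linarith
    · filter_upwards [hEm, hEn] with n h1 h2
      have hn0 : (0:ℝ) ≤ (n:ℝ) := Nat.cast_nonneg n
      have hn0' : (n:ℝ) ≠ 0 := by exact_mod_cast Nat.one_le_iff_ne_zero.mp h2
      have hs := sum_inv_sq_le (m := m n) (n := n) h1 (Nat.sub_le n _)
      have h3 := mul_le_mul_of_nonneg_left hs hn0
      have h4 : (n:ℝ) * ((m n : ℝ)⁻¹ - (n:ℝ)⁻¹) = (n:ℝ)/(m n : ℝ) - 1 := by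
        rw [mul_sub, mul_inv_cancel₀ hn0', div_eq_mul_inv]
      linarith
  · have hU4 : Tendsto (fun n : ℕ => ((1-α)^4)⁻¹ * (n:ℝ)⁻¹) atTop (𝓝 0) := by
      rw [← mul_zero (((1-α)^4)⁻¹)]
      exact tendsto_inv_atTop_nhds_zero_nat.const_mul _
    apply tendsto_of_tendsto_of_tendsto_of_le_of_le'
      (tendsto_const_nhds (x := (0:ℝ))) hU4
    · filter_upwards with n
      positivity
    · filter_upwards [hEn] with n h2
      have hn0 : (0:ℝ) < (n:ℝ) := by exact_mod_cast h2
      have hs := sum_inv_pow4_le (m := m n) (n := n) (Nat.sub_le n _)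
      have hm1 : (1-α)*(n:ℝ) ≤ (m n : ℝ)+1 := by linarith [hm_lb n]
      have hpos : (0:ℝ) < (1-α)*(n:ℝ) := by positivity
      calc (n:ℝ)^2 * ∑ j ∈ Finset.Icc (m n + 1) n, (((j:ℝ))^4)⁻¹
          ≤ (n:ℝ)^2 * ((n:ℝ) * (((m n : ℝ)+1)^4)⁻¹) :=
            mul_le_mul_of_nonneg_left hs (sq_nonneg _)
        _ ≤ (n:ℝ)^2 * ((n:ℝ) * ((((1-α)*(n:ℝ)))^4)⁻¹) := by gcongr
        _ = ((1-α)^4)⁻¹ * (n:ℝ)⁻¹ := by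
            rw [mul_pow]
            field_simp

end Aux

open MeasureTheory ProbabilityTheory Finset Filter Topology

/-- For each `n`, let `X n 1, ..., X n n` be independent with `X n i` exponential of
rate `(n-i+1)²`, and `Y n k = ∑_{i=1}^k X n i`. For `0 ≤ α < 1`:
`E[Y n ⌈αn⌉] = ∑_{i=1}^{⌈αn⌉} (n-i+1)⁻²`, `n E[Y n ⌈αn⌉] → α/(1-α)`,
`n² Var(Y n ⌈αn⌉) → 0`, and `n Y n ⌈αn⌉ → α/(1-α)` in probability. -/
theorem stmt6
    {Ω : Type*} [MeasurableSpace Ω] (μ : Measure Ω) [IsProbabilityMeasure μ]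
    (X : ℕ → ℕ → Ω → ℝ)
    (hmeas : ∀ n i, Measurable (X n i))
    (hindep : ∀ n, iIndepFun (X n) μ)
    (hdist : ∀ n, ∀ i ∈ Icc 1 n, μ.map (X n i) = expMeasure (((n - i + 1 : ℕ) : ℝ) ^ 2))
    (Y : ℕ → ℕ → Ω → ℝ) (hY : ∀ n k ω, Y n k ω = ∑ i ∈ Icc 1 k, X n i ω)
    (α : ℝ) (hα0 : 0 ≤ α) (hα1 : α < 1) :
    (∀ n : ℕ, μ[Y n ⌈α * n⌉₊] = ∑ i ∈ Icc 1 ⌈α * n⌉₊, (((n - i + 1 : ℕ) : ℝ) ^ 2)⁻¹) ∧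
    Tendsto (fun n : ℕ => (n : ℝ) * μ[Y n ⌈α * n⌉₊]) atTop (𝓝 (α / (1 - α))) ∧
    Tendsto (fun n : ℕ => (n : ℝ) ^ 2 * variance (Y n ⌈α * n⌉₊) μ) atTop (𝓝 0) ∧
    (∀ ε > 0, Tendsto
      (fun n : ℕ => μ {ω | ε ≤ |(n : ℝ) * Y n ⌈α * n⌉₊ ω - α / (1 - α)|})
      atTop (𝓝 0)) := by
  have h1α : (0:ℝ) < 1 - α := by linarith
  have hk_le : ∀ n : ℕ, ⌈α * (n:ℝ)⌉₊ ≤ n :=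
    fun n => Nat.ceil_le.2 (by nlinarith [Nat.cast_nonneg (α := ℝ) n])
  have hsub : ∀ n : ℕ, Icc 1 ⌈α * (n:ℝ)⌉₊ ⊆ Icc 1 n :=
    fun n => Finset.Icc_subset_Icc_right (hk_le n)
  have hrpos : ∀ n i : ℕ, (0:ℝ) < ((n - i + 1 : ℕ) : ℝ) ^ 2 := fun n i => by
    have : (0:ℝ) < ((n - i + 1 : ℕ) : ℝ) := by exact_mod_cast Nat.succ_pos (n - i)
    positivity
  have hprops : ∀ n : ℕ, ∀ i ∈ Icc 1 n, MemLp (X n i) 2 μ ∧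
      μ[X n i] = (((n - i + 1 : ℕ) : ℝ) ^ 2)⁻¹ ∧
      variance (X n i) μ = ((((n - i + 1 : ℕ) : ℝ) ^ 2) ^ 2)⁻¹ :=
    fun n i hi => exp_props μ (hmeas n i) (hrpos n i) (hdist n i hi)
  have hYfun : ∀ n k : ℕ, Y n k = fun ω => ∑ i ∈ Icc 1 k, X n i ω :=
    fun n k => funext fun ω => hY n k ω
  -- Part 1
  have part1 : ∀ n : ℕ, μ[Y n ⌈α * (n:ℝ)⌉₊]
      = ∑ i ∈ Icc 1 ⌈α * (n:ℝ)⌉₊, (((n - i + 1 : ℕ) : ℝ) ^ 2)⁻¹ := by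
    intro n
    rw [hYfun, integral_finset_sum _
      (fun i hi => ((hprops n i (hsub n hi)).1.integrable one_le_two))]
    exact Finset.sum_congr rfl fun i hi => (hprops n i (hsub n hi)).2.1
  -- variance formula
  have part_var : ∀ n : ℕ, variance (Y n ⌈α * (n:ℝ)⌉₊) μ
      = ∑ i ∈ Icc 1 ⌈α * (n:ℝ)⌉₊, (((n - i + 1 : ℕ) : ℝ) ^ 4)⁻¹ := by
    intro n
    have hYs : Y n ⌈α * (n:ℝ)⌉₊ = ∑ i ∈ Icc 1 ⌈α * (n:ℝ)⌉₊, X n i :=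
      funext fun ω => by rw [hY]; simp [Finset.sum_apply]
    rw [hYs, IndepFun.variance_sum (fun i hi => (hprops n i (hsub n hi)).1)
      (fun i hi j hj hij => (hindep n).indepFun hij)]
    refine Finset.sum_congr rfl fun i hi => ?_
    rw [(hprops n i (hsub n (by exact_mod_cast hi))).2.2, ← pow_mul]
  -- reindexing
  have reindex : ∀ (n p : ℕ), ∑ i ∈ Icc 1 ⌈α * (n:ℝ)⌉₊, (((n - i + 1 : ℕ) : ℝ) ^ p)⁻¹
      = ∑ j ∈ Finset.Icc (n - ⌈α * (n:ℝ)⌉₊ + 1) n, (((j:ℝ)) ^ p)⁻¹ := by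
    intro n p
    refine Finset.sum_nbij' (fun i => n - i + 1) (fun j => n - j + 1) ?_ ?_ ?_ ?_ ?_
    · intro a ha
      simp only [Finset.mem_Icc] at *
      have := hk_le n; omega
    · intro a ha
      simp only [Finset.mem_Icc] at *
      have := hk_le n; omega
    · intro a ha
      simp only [Finset.mem_Icc] at *
      have := hk_le n; omega
    · intro a ha
      simp only [Finset.mem_Icc] at *
      have := hk_le n; omega
    · intro a ha; rfl
  have part2 : Tendsto (fun n : ℕ => (n : ℝ) * μ[Y n ⌈α * (n:ℝ)⌉₊]) atTop (𝓝 (α / (1 - α))) :=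
    (sum_limits α hα0 hα1).1.congr fun n => by rw [part1 n, reindex n 2]
  have part3 : Tendsto (fun n : ℕ => (n : ℝ) ^ 2 * variance (Y n ⌈α * (n:ℝ)⌉₊) μ)
      atTop (𝓝 0) :=
    (sum_limits α hα0 hα1).2.congr fun n => by rw [part_var n, reindex n 4]
  refine ⟨part1, part2, part3, ?_⟩
  -- Part 4
  intro ε hε
  have hmem : ∀ n : ℕ, MemLp (Y n ⌈α * (n:ℝ)⌉₊) 2 μ := fun n => by
    rw [hYfun]
    exact memLp_finset_sum _ fun i hi => (hprops n i (hsub n hi)).1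
  have hε2 : 0 < ε / 2 := half_pos hε
  have hev : ∀ᶠ n : ℕ in atTop,
      |(n:ℝ) * μ[Y n ⌈α * (n:ℝ)⌉₊] - α / (1 - α)| < ε / 2 :=
    part2.eventually (eventually_abs_sub_lt _ hε2)
  have hUp : Tendsto (fun n : ℕ =>
      ENNReal.ofReal ((n:ℝ)^2 * variance (Y n ⌈α * (n:ℝ)⌉₊) μ / (ε/2)^2)) atTop (𝓝 0) := by
    have := ENNReal.tendsto_ofReal (part3.div_const ((ε/2)^2))
    simpa using this
  apply tendsto_of_tendsto_of_tendsto_of_le_of_le' tendsto_const_nhds hUp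
  · filter_upwards with n
    exact zero_le
  · filter_upwards [hev] with n hn
    set Z : Ω → ℝ := fun ω => (n:ℝ) * Y n ⌈α * (n:ℝ)⌉₊ ω with hZ
    have hZmem : MemLp Z 2 μ := (hmem n).const_mul _
    have hZmean : μ[Z] = (n:ℝ) * μ[Y n ⌈α * (n:ℝ)⌉₊] := integral_const_mul _ _
    have hZvar : variance Z μ = (n:ℝ)^2 * variance (Y n ⌈α * (n:ℝ)⌉₊) μ :=
      variance_const_mul _ _ _
    have cheb := meas_ge_le_variance_div_sq hZmem hε2
    refine le_trans (measure_mono ?_) (by rwa [hZvar] at cheb)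
    intro ω hω
    simp only [Set.mem_setOf_eq] at *
    have htr := abs_sub_le ((n:ℝ) * Y n ⌈α * (n:ℝ)⌉₊ ω) (μ[Z]) (α / (1 - α))
    rw [hZmean] at htr ⊢
    have h5 : |Z ω - (n:ℝ) * μ[Y n ⌈α * (n:ℝ)⌉₊]| ≥ ε / 2 := by linarith
    exact h5
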